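/- Let M be a 3-connected matroid, X ⊆ E(M) with λ(X) = 2, |X| ≥ 3, and |E(M)| ≥ |X| + 4. If e ∈ cl(X) − X, then either e is contained in a triad of M, or M\e is 3-connected. -/

import Mathlib

open Matroid Set

namespace DetPairs

variable {α : Type*}

/-- The rank of a set in a matroid: the maximum size of an independent subset
(as an integer, for convenient arithmetic). -/
noncomputable def r (M : Matroid α) (X : Set α) : ℤ :=
  ((sSup (Set.ncard '' {I | M.Indep I ∧ I ⊆ X}) : ℕ) : ℤ)

/-- The connectivity function `λ_M(X) = r(X) + r(E − X) − r(M)`. -/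
noncomputable def lam (M : Matroid α) (X : Set α) : ℤ :=
  r M X + r M (M.E \ X) - r M M.E

/-- Local connectivity `⊓(X,Y) = r(X) + r(Y) − r(X ∪ Y)`. -/
noncomputable def localConn (M : Matroid α) (X Y : Set α) : ℤ :=
  r M X + r M Y - r M (X ∪ Y)

/-- A circuit: a minimal dependent set. -/
def Circuit (M : Matroid α) (C : Set α) : Prop :=
  C ⊆ M.E ∧ ¬ M.Indep C ∧ ∀ D, D ⊂ C → M.Indep D

/-- A cocircuit: a circuit of the dual. -/
def Cocircuit (M : Matroid α) (C : Set α) : Prop := Circuit M✶ C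

/-- A triangle: a 3-element circuit. -/
def Triangle (M : Matroid α) (T : Set α) : Prop := Circuit M T ∧ T.ncard = 3

/-- A triad: a 3-element cocircuit. -/
def Triad (M : Matroid α) (T : Set α) : Prop := Cocircuit M T ∧ T.ncard = 3

/-- A quad: a 4-element set that is both a circuit and a cocircuit. -/
def Quad (M : Matroid α) (Q : Set α) : Prop :=
  Circuit M Q ∧ Cocircuit M Q ∧ Q.ncard = 4

/-- Deletion of a set of elements. -/
def Del (M : Matroid α) (D : Set α) : Matroid α := M ↾ (M.E \ D)

/-- Contraction of a set of elements. -/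
def Con (M : Matroid α) (C : Set α) : Matroid α := (M✶ ↾ (M.E \ C))✶

/-- `M` is 3-connected: it has no `k`-separation for `k = 1, 2`, where a
`k`-separation is a set `X` with `λ(X) = k − 1`, `|X| ≥ k` and `|E − X| ≥ k`. -/
def ThreeConnected (M : Matroid α) : Prop :=
  ∀ k : ℕ, 0 < k → k < 3 → ∀ X ⊆ M.E,
    ¬ (lam M X = (k : ℤ) - 1 ∧ (k : ℤ) ≤ X.ncard ∧ (k : ℤ) ≤ (M.E \ X).ncard)

/-- A detachable pair: distinct elements `e, f` such that `M \ e \ f` or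
`M / e / f` is 3-connected. -/
def DetachablePair (M : Matroid α) (e f : α) : Prop :=
  e ≠ f ∧ e ∈ M.E ∧ f ∈ M.E ∧
    (ThreeConnected (Del M {e, f}) ∨ ThreeConnected (Con M {e, f}))

/-- The triple of elements with indices `i, i+1, i+2` in an ordering. -/
def tri (e : ℕ → α) (i : ℕ) : Set α := {e i, e (i + 1), e (i + 2)}

/-- `(e 0, …, e (n-1))` is a fan ordering of length `n ≥ 3` in `M`:
consecutive triples alternate between triangles and triads. -/
def FanOrd (M : Matroid α) (n : ℕ) (e : ℕ → α) : Prop :=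
  3 ≤ n ∧ Set.InjOn e (Set.Iio n) ∧ (∀ i < n, e i ∈ M.E) ∧
    (Triangle M (tri e 0) ∨ Triad M (tri e 0)) ∧
    ∀ i, i + 3 < n →
      (Triangle M (tri e i) → Triad M (tri e (i + 1))) ∧
      (Triad M (tri e i) → Triangle M (tri e (i + 1)))

/-- A fan (as a set): either a 2-element subset of the ground set, or the
underlying set of a fan ordering of length at least 3. -/
def IsFan (M : Matroid α) (F : Set α) : Prop :=
  (F ⊆ M.E ∧ F.ncard = 2) ∨ ∃ n e, FanOrd M n e ∧ F = e '' Set.Iio n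

/-- A maximal fan: a fan contained in no strictly larger fan. -/
def MaximalFan (M : Matroid α) (F : Set α) : Prop :=
  IsFan M F ∧ ∀ F', IsFan M F' → F ⊆ F' → F' = F

/-- `M` is a wheel or a whirl: its ground set has a cyclic ordering of even size
`2n` in which consecutive triples alternate between triangles and triads. -/
def IsWheelOrWhirl (M : Matroid α) : Prop :=
  ∃ (n : ℕ) (e : ℕ → α), 2 ≤ n ∧ Set.InjOn e (Set.Iio (2 * n)) ∧
    M.E = e '' Set.Iio (2 * n) ∧
    ∀ i < 2 * n,
      (i % 2 = 0 → Triangle M {e i, e ((i + 1) % (2 * n)), e ((i + 2) % (2 * n))}) ∧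
      (i % 2 = 1 → Triad M {e i, e ((i + 1) % (2 * n)), e ((i + 2) % (2 * n))})

/-- An `M(K₄)`-separator: a 6-element set `{a,b,c,x,y,z}` where `{x,y,z}` is a
triad and `{a,b,c}`, `{a,x,y}`, `{b,x,z}`, `{c,y,z}` are triangles. -/
def MK4Sep (M : Matroid α) (S : Set α) : Prop :=
  ∃ a b c x y z : α, S = {a, b, c, x, y, z} ∧ S.ncard = 6 ∧
    Triad M {x, y, z} ∧ Triangle M {a, b, c} ∧ Triangle M {a, x, y} ∧
    Triangle M {b, x, z} ∧ Triangle M {c, y, z}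

/-- A vertical 3-separation `(X, {e}, Y)` of `M`. -/
def VertThreeSep (M : Matroid α) (X : Set α) (e : α) (Y : Set α) : Prop :=
  X ∪ {e} ∪ Y = M.E ∧ Disjoint X Y ∧ e ∉ X ∧ e ∉ Y ∧
    lam M X = 2 ∧ lam M Y = 2 ∧ e ∈ M.closure X ∧ e ∈ M.closure Y ∧
    3 ≤ r M X ∧ 3 ≤ r M Y

/-- `N` is a simplification of `M`: a restriction of `M` to a set of
representatives, one from each parallel class of nonloops. -/
def SimplificationOf (M N : Matroid α) : Prop :=
  ∃ X : Set α, (∀ x ∈ X, x ∈ M.E ∧ x ∉ M.closure ∅) ∧ N = M ↾ X ∧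
    ∀ y ∈ M.E, y ∉ M.closure ∅ →
      ∃! x, x ∈ X ∧ M.closure {y} = M.closure {x}

variable {M : Matroid α} {X Y Z W A B I J R : Set α} {e : α}

lemma ncard_le_of_indep_basis [M.Finite] (hI : M.IsBasis I X) (hJ : M.Indep J) (hJX : J ⊆ X) :
    J.ncard ≤ I.ncard := by
  obtain ⟨J', hJ', hJJ'⟩ := hJ.subset_isBasis_of_subset hJX hI.subset_ground
  have h1 : J'.ncard = I.ncard := hJ'.restrict_isBase.ncard_eq_ncard_of_isBase hI.restrict_isBase
  exact h1 ▸ ncard_le_ncard hJJ' (M.set_finite J' hJ'.left_subset_ground)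

lemma r_eq_of_basis [M.Finite] (hI : M.IsBasis I X) : r M X = I.ncard := by
  have hub : ∀ n ∈ Set.ncard '' {J | M.Indep J ∧ J ⊆ X}, n ≤ I.ncard := by
    rintro n ⟨J, ⟨hJ, hJX⟩, rfl⟩
    exact ncard_le_of_indep_basis hI hJ hJX
  have hmem : I.ncard ∈ Set.ncard '' {J | M.Indep J ∧ J ⊆ X} :=
    ⟨I, ⟨hI.indep, hI.subset⟩, rfl⟩
  unfold r
  norm_cast
  exact le_antisymm (csSup_le ⟨_, hmem⟩ hub) (le_csSup ⟨I.ncard, hub⟩ hmem)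

lemma r_nonneg (M : Matroid α) (X : Set α) : 0 ≤ r M X := Int.ofNat_nonneg _

lemma indep_ncard_le_r [M.Finite] (hJ : M.Indep J) (hJX : J ⊆ X) (hX : X ⊆ M.E) :
    (J.ncard : ℤ) ≤ r M X := by
  obtain ⟨I, hI⟩ := M.exists_isBasis X hX
  rw [r_eq_of_basis hI]
  exact_mod_cast ncard_le_of_indep_basis hI hJ hJX

lemma r_mono [M.Finite] (hXY : X ⊆ Y) (hY : Y ⊆ M.E) : r M X ≤ r M Y := by
  obtain ⟨I, hI⟩ := M.exists_isBasis X (hXY.trans hY)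
  rw [r_eq_of_basis hI]
  exact indep_ncard_le_r hI.indep (hI.subset.trans hXY) hY

lemma r_le_ncard [M.Finite] (hX : X ⊆ M.E) : r M X ≤ X.ncard := by
  obtain ⟨I, hI⟩ := M.exists_isBasis X hX
  rw [r_eq_of_basis hI]
  exact_mod_cast ncard_le_ncard hI.subset (M.set_finite X hX)

lemma r_submod [M.Finite] (hA : A ⊆ M.E) (hB : B ⊆ M.E) :
    r M (A ∪ B) + r M (A ∩ B) ≤ r M A + r M B := by
  obtain ⟨I, hI⟩ := M.exists_isBasis (A ∩ B) ((inter_subset_left).trans hA)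
  obtain ⟨J, hJ, hIJ⟩ := hI.indep.subset_isBasis_of_subset
    (hI.subset.trans (inter_subset_left.trans subset_union_left)) (union_subset hA hB)
  have hJfin : J.Finite := M.set_finite J hJ.left_subset_ground
  have hcard : (J ∩ A).ncard + (J ∩ B).ncard = J.ncard + (J ∩ (A ∩ B)).ncard := by
    have h1 : (J ∩ A) ∪ (J ∩ B) = J := by
      rw [← inter_union_distrib_left, inter_eq_left]; exact hJ.subset
    have h2 : (J ∩ A) ∩ (J ∩ B) = J ∩ (A ∩ B) := by
      ext x; simp only [mem_inter_iff]; tauto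
    have := ncard_union_add_ncard_inter (J ∩ A) (J ∩ B) (hJfin.subset inter_subset_left)
      (hJfin.subset inter_subset_left)
    rw [h1, h2] at this
    omega
  have hIJAB : I ⊆ J ∩ (A ∩ B) := subset_inter hIJ hI.subset
  have hle : (J ∩ (A ∩ B)).ncard ≥ I.ncard := ncard_le_ncard hIJAB (hJfin.subset inter_subset_left)
  have hrA : ((J ∩ A).ncard : ℤ) ≤ r M A := indep_ncard_le_r (hJ.indep.subset inter_subset_left)
    inter_subset_right hA
  have hrB : ((J ∩ B).ncard : ℤ) ≤ r M B := indep_ncard_le_r (hJ.indep.subset inter_subset_left)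
    inter_subset_right hB
  rw [r_eq_of_basis hJ, r_eq_of_basis hI]
  omega

lemma r_insert_le [M.Finite] (hX : X ⊆ M.E) (he : e ∈ M.E) :
    r M (insert e X) ≤ r M X + 1 := by
  obtain ⟨I, hI⟩ := M.exists_isBasis X hX
  obtain ⟨J, hJ, hIJ⟩ := hI.indep.subset_isBasis_of_subset
    (hI.subset.trans (subset_insert e X)) (insert_subset he hX)
  have hJX : J ∩ X = I :=
    (hI.eq_of_subset_indep (hJ.indep.subset inter_subset_left)
      (subset_inter hIJ hI.subset) inter_subset_right).symm
  have hJsub : J ⊆ insert e I := by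
    intro x hx
    rcases hJ.subset hx with h | h
    · exact h ▸ mem_insert x _
    · exact mem_insert_of_mem _ (hJX ▸ ⟨hx, h⟩)
  rw [r_eq_of_basis hI, r_eq_of_basis hJ]
  have h1 : J.ncard ≤ (insert e I).ncard :=
    ncard_le_ncard hJsub ((M.set_finite I hI.left_subset_ground).insert e)
  have h2 : (insert e I).ncard ≤ I.ncard + 1 := ncard_insert_le e I
  omega

lemma r_insert_of_mem_closure [M.Finite] (he : e ∈ M.closure X) (hX : X ⊆ M.E) :
    r M (insert e X) = r M X := by
  obtain ⟨I, hI⟩ := M.exists_isBasis X hX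
  have hI' : M.IsBasis I (insert e X) := by
    rw [isBasis_iff_indep_subset_closure]
    refine ⟨hI.indep, hI.subset.trans (subset_insert e X), insert_subset ?_ hI.subset_closure⟩
    rwa [hI.closure_eq_closure]
  rw [r_eq_of_basis hI, r_eq_of_basis hI']

lemma r_insert_of_not_mem_closure [M.Finite] (heE : e ∈ M.E) (he : e ∉ M.closure X)
    (hX : X ⊆ M.E) : r M (insert e X) = r M X + 1 := by
  obtain ⟨I, hI⟩ := M.exists_isBasis X hX
  have heI : e ∉ I := fun h => he (M.subset_closure X hX (hI.subset h))
  have hind : M.Indep (insert e I) := by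
    rw [hI.indep.insert_indep_iff_of_notMem heI]
    rw [hI.closure_eq_closure]
    exact ⟨heE, he⟩
  have hI' : M.IsBasis (insert e I) (insert e X) := hI.insert_isBasis_insert hind
  rw [r_eq_of_basis hI, r_eq_of_basis hI',
    ncard_insert_of_notMem heI (M.set_finite I hI.left_subset_ground)]
  push_cast
  ring

lemma r_restrict (hZR : Z ⊆ R) : r (M ↾ R) Z = r M Z := by
  have h : {I | (M ↾ R).Indep I ∧ I ⊆ Z} = {I | M.Indep I ∧ I ⊆ Z} := by
    ext I
    simp only [mem_setOf_eq, restrict_indep_iff]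
    exact ⟨fun h => ⟨h.1.1, h.2⟩, fun h => ⟨⟨h.1, h.2.trans hZR⟩, h.2⟩⟩
  unfold r
  rw [h]

lemma coindep_iff_r [M.Finite] (hI : I ⊆ M.E) :
    M✶.Indep I ↔ r M (M.E \ I) = r M M.E := by
  constructor
  · rintro h
    obtain ⟨hIE, B, hB, hdisj⟩ := dual_indep_iff_exists'.mp h
    have hBsub : B ⊆ M.E \ I := subset_diff.mpr ⟨hB.subset_ground, hdisj.symm⟩
    have h1 : (B.ncard : ℤ) ≤ r M (M.E \ I) := indep_ncard_le_r hB.indep hBsub diff_subset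
    have h2 : r M M.E = B.ncard := r_eq_of_basis hB.isBasis_ground
    have h3 : r M (M.E \ I) ≤ r M M.E := r_mono diff_subset Subset.rfl
    omega
  · intro h
    obtain ⟨J, hJ⟩ := M.exists_isBasis (M.E \ I) diff_subset
    obtain ⟨B, hB, hJB⟩ := hJ.indep.exists_isBase_superset
    have h2 : r M M.E = B.ncard := r_eq_of_basis hB.isBasis_ground
    have h3 : r M (M.E \ I) = J.ncard := r_eq_of_basis hJ
    have hBJ : B = J := by
      symm
      apply Set.eq_of_subset_of_ncard_le hJB _ (M.set_finite B hB.subset_ground)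
      omega
    rw [dual_indep_iff_exists']
    refine ⟨hI, J, hBJ ▸ hB, ?_⟩
    exact (subset_diff.mp hJ.subset).2.symm



lemma lam_nonneg [M.Finite] (hX : X ⊆ M.E) : 0 ≤ lam M X := by
  have h := r_submod (M := M) hX (diff_subset (s := M.E) (t := X))
  rw [union_diff_cancel hX] at h
  have h0 := r_nonneg M (X ∩ (M.E \ X))
  unfold lam
  omega

lemma not_lam_zero (hM : ThreeConnected M) (hX : X ⊆ M.E) (h1 : 1 ≤ X.ncard)
    (h1' : 1 ≤ (M.E \ X).ncard) : lam M X ≠ 0 := by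
  intro h
  refine hM 1 one_pos (by norm_num) X hX ⟨by rw [h]; norm_num, ?_, ?_⟩ <;> push_cast <;> omega

lemma not_lam_one (hM : ThreeConnected M) (hX : X ⊆ M.E) (h2 : 2 ≤ X.ncard)
    (h2' : 2 ≤ (M.E \ X).ncard) : lam M X ≠ 1 := by
  intro h
  refine hM 2 two_pos (by norm_num) X hX ⟨by rw [h]; norm_num, ?_, ?_⟩ <;> push_cast <;> omega

lemma lam_ge_two [M.Finite] (hM : ThreeConnected M) (hX : X ⊆ M.E) (h2 : 2 ≤ X.ncard)
    (h2' : 2 ≤ (M.E \ X).ncard) : 2 ≤ lam M X := by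
  have h0 := lam_nonneg hX
  have h1 := not_lam_zero hM hX (by omega) (by omega)
  have h2 := not_lam_one hM hX h2 h2'
  omega

/-- A 3-connected matroid on at least 5 elements has no cocircuit of size ≤ 2. -/
lemma r_diff_small [M.Finite] (hM : ThreeConnected M) (hE5 : 5 ≤ M.E.ncard)
    {D : Set α} (hD : D ⊆ M.E) (hD2 : D.ncard ≤ 2) : r M (M.E \ D) = r M M.E := by
  by_contra hne
  have hle : r M (M.E \ D) ≤ r M M.E := r_mono diff_subset Subset.rfl
  have hrD : r M D ≤ D.ncard := r_le_ncard hD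
  have hfin := M.ground_finite
  have hD0 : D.ncard ≠ 0 := by
    intro h0
    rw [(ncard_eq_zero (hfin.subset hD)).mp h0, diff_empty] at hne
    exact hne rfl
  have hcard : (M.E \ D).ncard = M.E.ncard - D.ncard := ncard_diff hD (hfin.subset hD)
  have h0 := lam_nonneg hD
  have hl1 : lam M D ≤ (D.ncard : ℤ) - 1 := by unfold lam; omega
  have hz := not_lam_zero hM hD (by omega) (by omega)
  have ho := not_lam_one hM hD (by omega) (by omega)
  have : (D.ncard : ℤ) ≤ 2 := by exact_mod_cast hD2
  rcases (show D.ncard = 1 ∨ D.ncard = 2 by omega) with h | h <;> rw [h] at hl1 <;>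
    simp at hl1 <;> omega

lemma diff_eq_insert_diff (heE : e ∈ M.E) (hZ : Z ⊆ M.E \ {e}) :
    M.E \ Z = insert e ((M.E \ {e}) \ Z) := by
  have heZ : e ∉ Z := fun h' => (hZ h').2 rfl
  ext x
  simp only [mem_diff, mem_insert_iff, mem_singleton_iff]
  constructor
  · rintro ⟨hx, hxZ⟩
    by_cases hxe : x = e
    · exact Or.inl hxe
    · exact Or.inr ⟨⟨hx, hxe⟩, hxZ⟩
  · rintro (rfl | ⟨⟨hx, _⟩, hxZ⟩)
    · exact ⟨heE, heZ⟩
    · exact ⟨hx, hxZ⟩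

lemma diff_insert_eq (hZ : Z ⊆ M.E \ {e}) :
    M.E \ insert e Z = (M.E \ {e}) \ Z := by
  rw [← singleton_union, ← diff_diff]

/-- `M \ e` is connected. -/
lemma del_conn [M.Finite] (hM : ThreeConnected M) (heE : e ∈ M.E) (hE7 : 7 ≤ M.E.ncard)
    (hZ : Z ⊆ M.E \ {e}) (hZ1 : Z.Nonempty) (hW1 : ((M.E \ {e}) \ Z).Nonempty) :
    r M Z + r M ((M.E \ {e}) \ Z) - r M M.E ≠ 0 := by
  intro h
  have hWE : (M.E \ {e}) \ Z ⊆ M.E := diff_subset.trans diff_subset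
  have hZE : Z ⊆ M.E := hZ.trans diff_subset
  have heZ : e ∉ Z := fun h' => (hZ h').2 rfl
  have hfin := M.ground_finite
  have h1 : lam M Z ≤ 1 := by
    unfold lam
    rw [diff_eq_insert_diff heE hZ]
    have := r_insert_le (M := M) hWE heE
    omega
  have h2 : lam M (insert e Z) ≤ 1 := by
    unfold lam
    rw [diff_insert_eq hZ]
    have := r_insert_le (M := M) hZE heE
    omega
  have h0Z := lam_nonneg hZE
  have h0Z' := lam_nonneg (insert_subset heE hZE)
  have hcZ : 1 ≤ Z.ncard := (ncard_pos (hfin.subset hZE)).mpr hZ1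
  have hcW : 1 ≤ ((M.E \ {e}) \ Z).ncard := (ncard_pos (hfin.subset hWE)).mpr hW1
  have hcE' : (M.E \ {e}).ncard = M.E.ncard - 1 := by
    rw [ncard_diff (singleton_subset_iff.mpr heE) (finite_singleton e), ncard_singleton]
  have hcWZ : ((M.E \ {e}) \ Z).ncard = (M.E \ {e}).ncard - Z.ncard :=
    ncard_diff hZ (hfin.subset hZE)
  have hcEZ : (M.E \ Z).ncard = M.E.ncard - Z.ncard := ncard_diff hZE (hfin.subset hZE)
  have hcEeZ : (M.E \ insert e Z).ncard = M.E.ncard - (Z.ncard + 1) := by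
    rw [ncard_diff (insert_subset heE hZE) ((hfin.subset hZE).insert e), ncard_insert_of_notMem heZ (hfin.subset hZE)]
  rcases (show 2 ≤ Z.ncard ∨ Z.ncard = 1 by omega) with hc | hc
  · have hz := not_lam_zero hM hZE (by omega) (by omega)
    have ho := not_lam_one hM hZE (by omega) (by omega)
    omega
  · have hci : (insert e Z).ncard = 2 := by
      rw [ncard_insert_of_notMem heZ (hfin.subset hZE)]; omega
    have hz := not_lam_zero hM (insert_subset heE hZE) (by omega) (by omega)
    have ho := not_lam_one hM (insert_subset heE hZE) (by omega) (by omega)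
    omega

/-- `M \ e` is connected, inequality form. -/
lemma lam_del_ge_one [M.Finite] (hM : ThreeConnected M) (heE : e ∈ M.E)
    (hE7 : 7 ≤ M.E.ncard) (hZ : Z ⊆ M.E \ {e}) (hZ1 : Z.Nonempty)
    (hW1 : ((M.E \ {e}) \ Z).Nonempty) (hecl : e ∈ M.closure (M.E \ {e})) :
    1 ≤ r M Z + r M ((M.E \ {e}) \ Z) - r M M.E := by
  have hne := del_conn hM heE hE7 hZ hZ1 hW1
  have hsub := r_submod (M := M) (B := (M.E \ {e}) \ Z) (hZ.trans diff_subset)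
    (diff_subset.trans diff_subset)
  rw [union_diff_cancel hZ] at hsub
  have h0 := r_nonneg M (Z ∩ ((M.E \ {e}) \ Z))
  have hrE' : r M (M.E \ {e}) = r M M.E := by
    have h := r_insert_of_mem_closure hecl diff_subset
    rw [insert_diff_singleton, insert_eq_self.mpr heE] at h
    exact h.symm
  omega

/-- For a 2-separation of `M \ e`, `e` is not in the closure of either side. -/
lemma not_closure_compl [M.Finite] (hM : ThreeConnected M) (heE : e ∈ M.E)
    (hE7 : 7 ≤ M.E.ncard) (hZ : Z ⊆ M.E \ {e})
    (h1 : r M Z + r M ((M.E \ {e}) \ Z) - r M M.E = 1)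
    (hZ2 : 2 ≤ Z.ncard) (hW1 : ((M.E \ {e}) \ Z).Nonempty) :
    e ∉ M.closure ((M.E \ {e}) \ Z) := by
  intro hecl
  have hWE : (M.E \ {e}) \ Z ⊆ M.E := diff_subset.trans diff_subset
  have hZE : Z ⊆ M.E := hZ.trans diff_subset
  have hfin := M.ground_finite
  have hr : r M (insert e ((M.E \ {e}) \ Z)) = r M ((M.E \ {e}) \ Z) :=
    r_insert_of_mem_closure hecl hWE
  have hlam : lam M Z = 1 := by
    unfold lam
    rw [diff_eq_insert_diff heE hZ, hr]
    omega
  have heW : e ∉ (M.E \ {e}) \ Z := fun h => h.1.2 rfl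
  have hcW : 1 ≤ ((M.E \ {e}) \ Z).ncard := (ncard_pos (hfin.subset hWE)).mpr hW1
  have hcEZ : (M.E \ Z).ncard = ((M.E \ {e}) \ Z).ncard + 1 := by
    rw [diff_eq_insert_diff heE hZ, ncard_insert_of_notMem heW (hfin.subset hWE)]
  exact not_lam_one hM hZE hZ2 (by omega) hlam





/-- A 2-element side of a 2-separation of `M \ e` yields a triad containing `e`. -/
lemma triad_of_pair [M.Finite] (hM : ThreeConnected M) (heE : e ∈ M.E)
    (hE7 : 7 ≤ M.E.ncard) (hZ : Z ⊆ M.E \ {e})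
    (h1 : r M Z + r M ((M.E \ {e}) \ Z) - r M M.E = 1)
    (hZ2 : Z.ncard = 2) : ∃ T, Triad M T ∧ e ∈ T := by
  have hZE : Z ⊆ M.E := hZ.trans diff_subset
  have hfin := M.ground_finite
  have heZ : e ∉ Z := fun h' => (hZ h').2 rfl
  have hcEZ : (M.E \ Z).ncard = M.E.ncard - 2 := by
    rw [ncard_diff hZE (hfin.subset hZE), hZ2]
  have hrZ : r M Z = 2 := by
    have hub : r M Z ≤ 2 := by
      have := r_le_ncard (M := M) hZE
      rw [hZ2] at this
      exact_mod_cast this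
    by_contra hne
    have hmono : r M (M.E \ Z) ≤ r M M.E := r_mono diff_subset Subset.rfl
    have hl : lam M Z ≤ 1 := by unfold lam; omega
    have h0 := lam_nonneg hZE
    have hz := not_lam_zero hM hZE (by omega) (by omega)
    have ho := not_lam_one hM hZE (by omega) (by omega)
    omega
  have hrW : r M ((M.E \ {e}) \ Z) = r M M.E - 1 := by omega
  have hTsub : insert e Z ⊆ M.E := insert_subset heE hZE
  have hTcard : (insert e Z).ncard = 3 := by
    rw [ncard_insert_of_notMem heZ (hfin.subset hZE), hZ2]
  have hWT : M.E \ insert e Z = (M.E \ {e}) \ Z := diff_insert_eq hZ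
  refine ⟨insert e Z, ⟨⟨?_, ?_, ?_⟩, hTcard⟩, mem_insert e Z⟩
  · simpa using hTsub
  · intro hind
    have h := (coindep_iff_r hTsub).mp hind
    rw [hWT] at h
    omega
  · intro D hD
    have hDT : D ⊆ insert e Z := hD.subset
    have hDsub : D ⊆ M.E := hDT.trans hTsub
    have hDcard : D.ncard ≤ 2 := by
      have := ncard_lt_ncard hD ((hfin.subset hZE).insert e)
      omega
    exact (coindep_iff_r hDsub).mpr (r_diff_small hM (by omega) hDsub hDcard)

set_option maxHeartbeats 2000000 in
/-- If `λ(X) = 2`, `|X| ≥ 3`, `|E(M)| ≥ |X| + 4` and `e ∈ cl(X) − X`, then `e`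
is in a triad or `M \ e` is 3-connected. -/
theorem stmt9 (M : Matroid α) [M.Finite] (hM : ThreeConnected M)
    {X : Set α} (hXE : X ⊆ M.E) (hlam : lam M X = 2) (hX3 : 3 ≤ X.ncard)
    (hE : X.ncard + 4 ≤ M.E.ncard) {e : α} (he : e ∈ M.closure X \ X) :
    (∃ T, Triad M T ∧ e ∈ T) ∨ ThreeConnected (Del M {e}) := by
  by_contra hcon
  push_neg at hcon
  obtain ⟨hT, hD⟩ := hcon
  rw [ThreeConnected] at hD
  push_neg at hD
  obtain ⟨k, hk0, hk3, A, hAE, hlamA, hkA, hkB⟩ := hD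
  have heE : e ∈ M.E := mem_ground_of_mem_closure he.1
  have heX : e ∉ X := he.2
  have hfin := M.ground_finite
  have hXE' : X ⊆ M.E \ {e} := subset_diff_singleton hXE heX
  have hE7 : 7 ≤ M.E.ncard := by omega
  have heclE' : e ∈ M.closure (M.E \ {e}) := M.closure_subset_closure hXE' he.1
  have hrE' : r M (M.E \ {e}) = r M M.E := by
    have h := r_insert_of_mem_closure heclE' diff_subset
    rw [insert_diff_singleton, insert_eq_self.mpr heE] at h
    exact h.symm
  have hAE' : A ⊆ M.E \ {e} := hAE
  have hAEg : A ⊆ M.E := hAE'.trans diff_subset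
  have hBEg : (M.E \ {e}) \ A ⊆ M.E := diff_subset.trans diff_subset
  have hYE : (M.E \ {e}) \ X ⊆ M.E := diff_subset.trans diff_subset
  have hlamDel : lam (Del M {e}) A = r M A + r M ((M.E \ {e}) \ A) - r M M.E := by
    unfold lam Del
    rw [restrict_ground_eq, r_restrict hAE', r_restrict diff_subset,
      r_restrict Subset.rfl, hrE']
  -- cardinalities
  have hcE' : (M.E \ {e}).ncard = M.E.ncard - 1 := by
    rw [ncard_diff (singleton_subset_iff.mpr heE) (finite_singleton e), ncard_singleton]
  have hcY : ((M.E \ {e}) \ X).ncard = M.E.ncard - 1 - X.ncard := by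
    rw [ncard_diff hXE' (hfin.subset hXE), hcE']
  have hcB : ((M.E \ {e}) \ A).ncard = M.E.ncard - 1 - A.ncard := by
    rw [ncard_diff hAE' (hfin.subset hAEg), hcE']
  have hcX1 : (insert e X).ncard = X.ncard + 1 := ncard_insert_of_notMem heX (hfin.subset hXE)
  have hYdef : M.E \ insert e X = (M.E \ {e}) \ X := diff_insert_eq hXE'
  -- e is in the closure of Y = E' \ X as well (guts element)
  have hG : 2 ≤ lam M (insert e X) :=
    lam_ge_two hM (insert_subset heE hXE) (by omega) (by rw [hYdef]; omega)
  have hrins : r M (insert e X) = r M X := r_insert_of_mem_closure he.1 hXE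
  have hGe : 2 ≤ r M X + r M ((M.E \ {e}) \ X) - r M M.E := by
    unfold lam at hG
    rw [hrins, hYdef] at hG
    exact hG
  have hEXins : M.E \ X = insert e ((M.E \ {e}) \ X) := diff_eq_insert_diff heE hXE'
  have hmonoY : r M ((M.E \ {e}) \ X) ≤ r M (insert e ((M.E \ {e}) \ X)) :=
    r_mono (subset_insert _ _) (insert_subset heE hYE)
  unfold lam at hlam
  rw [hEXins] at hlam
  have hlamX' : r M X + r M ((M.E \ {e}) \ X) - r M M.E = 2 := by omega
  have hrYins : r M (insert e ((M.E \ {e}) \ X)) = r M ((M.E \ {e}) \ X) := by omega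
  have heclY : e ∈ M.closure ((M.E \ {e}) \ X) := by
    by_contra hne
    rw [r_insert_of_not_mem_closure heE hne hYE] at hrYins
    omega
  interval_cases k
  · -- k = 1 : M \ e would be disconnected
    rw [hlamDel] at hlamA
    norm_num at hlamA
    have hkA' : 1 ≤ A.ncard := by exact_mod_cast hkA
    have hkB0 : (1 : ℤ) ≤ (((M.E \ {e}) \ A).ncard : ℤ) := hkB
    have hkB' : 1 ≤ ((M.E \ {e}) \ A).ncard := by exact_mod_cast hkB0
    exact del_conn hM heE hE7 hAE' (nonempty_of_ncard_ne_zero (by omega))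
      (nonempty_of_ncard_ne_zero (by omega)) hlamA
  · -- k = 2 : a genuine 2-separation of M \ e
    rw [hlamDel] at hlamA
    have h1 : r M A + r M ((M.E \ {e}) \ A) - r M M.E = 1 := by
      push_cast at hlamA
      omega
    have hA2 : 2 ≤ A.ncard := by exact_mod_cast hkA
    have hkB0 : (2 : ℤ) ≤ (((M.E \ {e}) \ A).ncard : ℤ) := hkB
    have hB2 : 2 ≤ ((M.E \ {e}) \ A).ncard := by exact_mod_cast hkB0
    have hAne : A.Nonempty := nonempty_of_ncard_ne_zero (by omega)
    have hBne : ((M.E \ {e}) \ A).Nonempty := nonempty_of_ncard_ne_zero (by omega)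
    -- sides of size 2 would give a triad through e
    have hA3 : 3 ≤ A.ncard := by
      rcases eq_or_lt_of_le hA2 with h | h
      · obtain ⟨T, hTr, heT⟩ := triad_of_pair hM heE hE7 hAE' h1 h.symm
        exact absurd heT (hT T hTr)
      · omega
    have h1B : r M ((M.E \ {e}) \ A) + r M ((M.E \ {e}) \ ((M.E \ {e}) \ A)) - r M M.E = 1 := by
      rw [diff_diff_cancel_left hAE']
      omega
    have hB3 : 3 ≤ ((M.E \ {e}) \ A).ncard := by
      rcases eq_or_lt_of_le hB2 with h | h
      · obtain ⟨T, hTr, heT⟩ := triad_of_pair hM heE hE7 diff_subset h1B h.symm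
        exact absurd heT (hT T hTr)
      · omega
    -- e is in the closure of neither side
    have hnotB : e ∉ M.closure ((M.E \ {e}) \ A) :=
      not_closure_compl hM heE hE7 hAE' h1 hA2 hBne
    have hnotA : e ∉ M.closure A := by
      have h := not_closure_compl hM heE hE7 diff_subset h1B hB2
        (by rw [diff_diff_cancel_left hAE']; exact hAne)
      rwa [diff_diff_cancel_left hAE'] at h
    -- the four corners are nonempty
    have hXAne : (X ∩ A).Nonempty := by
      rcases eq_empty_or_nonempty (X ∩ A) with h | h
      · exfalso
        apply hnotB
        have hsub : X ⊆ (M.E \ {e}) \ A := by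
          intro x hx
          refine ⟨hXE' hx, fun hxA => ?_⟩
          exact (eq_empty_iff_forall_notMem.mp h x) ⟨hx, hxA⟩
        exact M.closure_subset_closure hsub he.1
      · exact h
    have hXBne : (X ∩ ((M.E \ {e}) \ A)).Nonempty := by
      rcases eq_empty_or_nonempty (X ∩ ((M.E \ {e}) \ A)) with h | h
      · exfalso
        apply hnotA
        have hsub : X ⊆ A := by
          intro x hx
          by_contra hxA
          exact (eq_empty_iff_forall_notMem.mp h x) ⟨hx, hXE' hx, hxA⟩
        exact M.closure_subset_closure hsub he.1
      · exact h
    have hYAne : (((M.E \ {e}) \ X) ∩ A).Nonempty := by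
      rcases eq_empty_or_nonempty (((M.E \ {e}) \ X) ∩ A) with h | h
      · exfalso
        apply hnotB
        have hsub : (M.E \ {e}) \ X ⊆ (M.E \ {e}) \ A := by
          intro x hx
          refine ⟨hx.1, fun hxA => ?_⟩
          exact (eq_empty_iff_forall_notMem.mp h x) ⟨hx, hxA⟩
        exact M.closure_subset_closure hsub heclY
      · exact h
    have hYBne : (((M.E \ {e}) \ X) ∩ ((M.E \ {e}) \ A)).Nonempty := by
      rcases eq_empty_or_nonempty (((M.E \ {e}) \ X) ∩ ((M.E \ {e}) \ A)) with h | h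
      · exfalso
        apply hnotA
        have hsub : (M.E \ {e}) \ X ⊆ A := by
          intro x hx
          by_contra hxA
          exact (eq_empty_iff_forall_notMem.mp h x) ⟨hx, hx.1, hxA⟩
        exact M.closure_subset_closure hsub heclY
      · exact h
    -- complements of corners within E' are nonempty
    have hCXAne : ((M.E \ {e}) \ (X ∩ A)).Nonempty :=
      hBne.mono (fun b hb => ⟨hb.1, fun hc => hb.2 hc.2⟩)
    have hCXBne : ((M.E \ {e}) \ (X ∩ ((M.E \ {e}) \ A))).Nonempty :=
      hAne.mono (fun a ha => ⟨hAE' ha, fun hc => hc.2.2 ha⟩)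
    have hCYAne : ((M.E \ {e}) \ (((M.E \ {e}) \ X) ∩ A)).Nonempty :=
      hBne.mono (fun b hb => ⟨hb.1, fun hc => hb.2 hc.2⟩)
    have hCYBne : ((M.E \ {e}) \ (((M.E \ {e}) \ X) ∩ ((M.E \ {e}) \ A))).Nonempty :=
      hAne.mono (fun a ha => ⟨hAE' ha, fun hc => hc.2.2 ha⟩)
    -- each corner is at least 1-separating in M \ e
    have hlXA := lam_del_ge_one hM heE hE7 (inter_subset_left.trans hXE') hXAne hCXAne heclE'
    have hlXB := lam_del_ge_one hM heE hE7 (inter_subset_left.trans hXE') hXBne hCXBne heclE'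
    have hlYA := lam_del_ge_one hM heE hE7 (inter_subset_left.trans diff_subset) hYAne hCYAne
      heclE'
    have hlYB := lam_del_ge_one hM heE hE7 (inter_subset_left.trans diff_subset) hYBne hCYBne
      heclE'
    -- identify complements of corners
    have hCXA : (M.E \ {e}) \ (X ∩ A) = ((M.E \ {e}) \ X) ∪ ((M.E \ {e}) \ A) := diff_inter
    have hCYB : (M.E \ {e}) \ (((M.E \ {e}) \ X) ∩ ((M.E \ {e}) \ A)) = X ∪ A := by
      rw [diff_inter, diff_diff_cancel_left hXE', diff_diff_cancel_left hAE']
    have hCXB : (M.E \ {e}) \ (X ∩ ((M.E \ {e}) \ A)) = ((M.E \ {e}) \ X) ∪ A := by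
      rw [diff_inter, diff_diff_cancel_left hAE']
    have hCYA : (M.E \ {e}) \ (((M.E \ {e}) \ X) ∩ A) = X ∪ ((M.E \ {e}) \ A) := by
      rw [diff_inter, diff_diff_cancel_left hXE']
    -- submodularity, uncrossing the 3-separation (X, Y) with (A, B)
    have hs1 := r_submod (M := M) hXE hAEg
    have hs2 := r_submod (M := M) hYE hBEg
    have hs3 := r_submod (M := M) hXE hBEg
    have hs4 := r_submod (M := M) hYE hAEg
    have hpair1 : (r M (X ∩ A) + r M ((M.E \ {e}) \ (X ∩ A)) - r M M.E)
        + (r M (((M.E \ {e}) \ X) ∩ ((M.E \ {e}) \ A))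
          + r M ((M.E \ {e}) \ (((M.E \ {e}) \ X) ∩ ((M.E \ {e}) \ A))) - r M M.E) ≤ 3 := by
      rw [hCXA, hCYB]
      omega
    have hpair2 : (r M (X ∩ ((M.E \ {e}) \ A)) + r M ((M.E \ {e}) \ (X ∩ ((M.E \ {e}) \ A)))
          - r M M.E)
        + (r M (((M.E \ {e}) \ X) ∩ A) + r M ((M.E \ {e}) \ (((M.E \ {e}) \ X) ∩ A))
          - r M M.E) ≤ 3 := by
      rw [hCXB, hCYA]
      omega
    have hXsubCYB : X ⊆ (M.E \ {e}) \ (((M.E \ {e}) \ X) ∩ ((M.E \ {e}) \ A)) :=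
      fun x hx => ⟨hXE' hx, fun hc => hc.1.2 hx⟩
    have hXsubCYA : X ⊆ (M.E \ {e}) \ (((M.E \ {e}) \ X) ∩ A) :=
      fun x hx => ⟨hXE' hx, fun hc => hc.1.2 hx⟩
    -- a corner that is 1-separating must be a single element
    have key : ∀ C, C ⊆ M.E \ {e} →
        (r M C + r M ((M.E \ {e}) \ C) - r M M.E = 1) →
        ((M.E \ {e}) \ C).Nonempty → e ∈ M.closure ((M.E \ {e}) \ C) → C.ncard ≤ 1 := by
      intro C hC h1C hWne hecl
      by_contra hge
      exact not_closure_compl hM heE hE7 hC h1C (by omega) hWne hecl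
    have hsm1 : (X ∩ A).ncard ≤ 1 ∨
        (((M.E \ {e}) \ X) ∩ ((M.E \ {e}) \ A)).ncard ≤ 1 := by
      rcases (show (r M (X ∩ A) + r M ((M.E \ {e}) \ (X ∩ A)) - r M M.E = 1)
          ∨ (r M (((M.E \ {e}) \ X) ∩ ((M.E \ {e}) \ A))
            + r M ((M.E \ {e}) \ (((M.E \ {e}) \ X) ∩ ((M.E \ {e}) \ A))) - r M M.E = 1)
          by omega) with h | h
      · exact Or.inl (key _ (inter_subset_left.trans hXE') h hCXAne
          (M.closure_subset_closure (diff_subset_diff_right inter_subset_left) heclY))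
      · exact Or.inr (key _ (inter_subset_left.trans diff_subset) h hCYBne
          (M.closure_subset_closure hXsubCYB he.1))
    have hsm2 : (X ∩ ((M.E \ {e}) \ A)).ncard ≤ 1 ∨ (((M.E \ {e}) \ X) ∩ A).ncard ≤ 1 := by
      rcases (show (r M (X ∩ ((M.E \ {e}) \ A))
            + r M ((M.E \ {e}) \ (X ∩ ((M.E \ {e}) \ A))) - r M M.E = 1)
          ∨ (r M (((M.E \ {e}) \ X) ∩ A)
            + r M ((M.E \ {e}) \ (((M.E \ {e}) \ X) ∩ A)) - r M M.E = 1)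
          by omega) with h | h
      · exact Or.inl (key _ (inter_subset_left.trans hXE') h hCXBne
          (M.closure_subset_closure (diff_subset_diff_right inter_subset_left) heclY))
      · exact Or.inr (key _ (inter_subset_left.trans diff_subset) h hCYAne
          (M.closure_subset_closure hXsubCYA he.1))
    -- counting the corners gives a contradiction
    have hsplitX : (X ∩ A).ncard + (X ∩ ((M.E \ {e}) \ A)).ncard = X.ncard := by
      have hU : (X ∩ A) ∪ (X ∩ ((M.E \ {e}) \ A)) = X := by
        ext x
        simp only [mem_union, mem_inter_iff, mem_diff, mem_singleton_iff]
        constructor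
        · rintro (h | h) <;> exact h.1
        · intro hx
          by_cases hxA : x ∈ A
          · exact Or.inl ⟨hx, hxA⟩
          · exact Or.inr ⟨hx, ⟨(hXE' hx).1, (hXE' hx).2⟩, hxA⟩
      have hdis : Disjoint (X ∩ A) (X ∩ ((M.E \ {e}) \ A)) := by
        rw [disjoint_iff_inter_eq_empty]
        ext x
        simp only [mem_inter_iff, mem_diff, mem_singleton_iff, mem_empty_iff_false, iff_false,
          not_and]
        tauto
      have h := ncard_union_eq hdis (hfin.subset (inter_subset_left.trans hXE) )
        (hfin.subset (inter_subset_left.trans hXE))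
      rw [hU] at h
      omega
    have hsplitY : (((M.E \ {e}) \ X) ∩ A).ncard
        + (((M.E \ {e}) \ X) ∩ ((M.E \ {e}) \ A)).ncard = ((M.E \ {e}) \ X).ncard := by
      have hU : (((M.E \ {e}) \ X) ∩ A) ∪ (((M.E \ {e}) \ X) ∩ ((M.E \ {e}) \ A))
          = (M.E \ {e}) \ X := by
        ext x
        simp only [mem_union, mem_inter_iff, mem_diff, mem_singleton_iff]
        constructor
        · rintro (h | h) <;> exact h.1
        · intro hx
          by_cases hxA : x ∈ A
          · exact Or.inl ⟨hx, hxA⟩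
          · exact Or.inr ⟨hx, ⟨hx.1.1, hx.1.2⟩, hxA⟩
      have hdis : Disjoint (((M.E \ {e}) \ X) ∩ A) (((M.E \ {e}) \ X) ∩ ((M.E \ {e}) \ A)) := by
        rw [disjoint_iff_inter_eq_empty]
        ext x
        simp only [mem_inter_iff, mem_diff, mem_singleton_iff, mem_empty_iff_false, iff_false,
          not_and]
        tauto
      have h := ncard_union_eq hdis (hfin.subset (inter_subset_left.trans hYE))
        (hfin.subset (inter_subset_left.trans hYE))
      rw [hU] at h
      omega
    have hsplitA : (X ∩ A).ncard + (((M.E \ {e}) \ X) ∩ A).ncard = A.ncard := by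
      have hU : (X ∩ A) ∪ (((M.E \ {e}) \ X) ∩ A) = A := by
        ext x
        simp only [mem_union, mem_inter_iff, mem_diff, mem_singleton_iff]
        constructor
        · rintro (h | h)
          · exact h.2
          · exact h.2
        · intro hx
          by_cases hxX : x ∈ X
          · exact Or.inl ⟨hxX, hx⟩
          · exact Or.inr ⟨⟨⟨(hAE' hx).1, (hAE' hx).2⟩, hxX⟩, hx⟩
      have hdis : Disjoint (X ∩ A) (((M.E \ {e}) \ X) ∩ A) := by
        rw [disjoint_iff_inter_eq_empty]
        ext x
        simp only [mem_inter_iff, mem_diff, mem_singleton_iff, mem_empty_iff_false, iff_false,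
          not_and]
        tauto
      have h := ncard_union_eq hdis (hfin.subset (inter_subset_left.trans hXE))
        (hfin.subset (inter_subset_left.trans hYE))
      rw [hU] at h
      omega
    have hsplitB : (X ∩ ((M.E \ {e}) \ A)).ncard + (((M.E \ {e}) \ X) ∩ ((M.E \ {e}) \ A)).ncard
        = ((M.E \ {e}) \ A).ncard := by
      have hU : (X ∩ ((M.E \ {e}) \ A)) ∪ (((M.E \ {e}) \ X) ∩ ((M.E \ {e}) \ A))
          = (M.E \ {e}) \ A := by
        ext x
        simp only [mem_union, mem_inter_iff, mem_diff, mem_singleton_iff]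
        constructor
        · rintro (h | h)
          · exact h.2
          · exact h.2
        · intro hx
          by_cases hxX : x ∈ X
          · exact Or.inl ⟨hxX, hx⟩
          · exact Or.inr ⟨⟨⟨hx.1.1, hx.1.2⟩, hxX⟩, hx⟩
      have hdis : Disjoint (X ∩ ((M.E \ {e}) \ A)) (((M.E \ {e}) \ X) ∩ ((M.E \ {e}) \ A)) := by
        rw [disjoint_iff_inter_eq_empty]
        ext x
        simp only [mem_inter_iff, mem_diff, mem_singleton_iff, mem_empty_iff_false, iff_false,
          not_and]
        tauto
      have h := ncard_union_eq hdis (hfin.subset (inter_subset_left.trans hXE))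
        (hfin.subset (inter_subset_left.trans hYE))
      rw [hU] at h
      omega
    have hY3 : 3 ≤ ((M.E \ {e}) \ X).ncard := by omega
    omega
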